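/- For each N there exists a solution (φ_N, H̄_N) of the weak KAM equation on the lattice: 𝓗_N(x, (−Δ_N)φ_N(x)) = H̄_N for all x ∈ Λ_N. Moreover it can be obtained as a limit: there is a sequence λ_k → 0 such that λ_k φ_{N,λ_k} → −H̄_N uniformly on Λ_N and φ_{N,λ_k}(·) − φ_{N,λ_k}(z) → φ_N(·) pointwise, where φ_{N,λ} solves λφ_{N,λ} + 𝓗_N(x, (−Δ_N)φ_{N,λ}) = 0 and z ∈ Λ_N is fixed. -/
import Mathlib


open scoped BigOperators RealInnerProductSpace
open MeasureTheory Filter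

noncomputable section

abbrev Evec (d : ℕ) := EuclideanSpace ℝ (Fin d)

def sgnz (a : ℝ) : ℤ := if 0 < a then 1 else if a < 0 then -1 else 0

def latE (d N : ℕ) (x : Fin d → ZMod N) : Evec d :=
  (WithLp.equiv 2 (Fin d → ℝ)).symm fun i => ((x i).val : ℝ) / N

def dplus {d N : ℕ} (φ : (Fin d → ZMod N) → ℝ) (x : Fin d → ZMod N) (i : Fin d) : ℝ :=
  (N : ℝ) * (φ (x + Pi.single i 1) - φ x)

def dminus {d N : ℕ} (φ : (Fin d → ZMod N) → ℝ) (x : Fin d → ZMod N) (i : Fin d) : ℝ :=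
  (N : ℝ) * (φ (x - Pi.single i 1) - φ x)

def DeltaN {d N : ℕ} (φ : (Fin d → ZMod N) → ℝ) (x : Fin d → ZMod N) : Fin d → ℝ × ℝ :=
  fun i => (dplus φ x i, dminus φ x i)

def negDeltaN {d N : ℕ} (φ : (Fin d → ZMod N) → ℝ) (x : Fin d → ZMod N) : Fin d → ℝ × ℝ :=
  fun i => (-dplus φ x i, -dminus φ x i)

def pairL {d : ℕ} (ξ : Fin d → ℝ × ℝ) (v : Evec d) : ℝ :=
  ∑ i, ((ξ i).1 * max (v i) 0 + (ξ i).2 * max (-(v i)) 0)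

def QN {d N : ℕ} (v : Evec d) (x y : Fin d → ZMod N) : ℝ :=
  (∑ i, if y = x + Pi.single i ((sgnz (v i) : ZMod N)) then (N : ℝ) * |v i| else 0)
    - (if y = x then (N : ℝ) * ∑ i, |v i| else 0)

def HNlat {d N : ℕ} (L : Evec d → Evec d → ℝ) (x : Fin d → ZMod N)
    (ξ : Fin d → ℝ × ℝ) : ℝ :=
  ⨆ v : Evec d, (pairL ξ v - L (latE d N x) v)

-- Auxiliary lemmas
lemma abs_coord_le {d : ℕ} (v : Evec d) (i : Fin d) : |v i| ≤ ‖v‖ := by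
  rw [EuclideanSpace.norm_eq]
  have h1 : |v i| = Real.sqrt (‖v i‖ ^ 2) := by
    rw [Real.sqrt_sq_eq_abs]; simp [abs_abs]
  rw [h1]
  apply Real.sqrt_le_sqrt
  exact Finset.single_le_sum (f := fun j => ‖v j‖ ^ 2) (fun j _ => by positivity)
    (Finset.mem_univ i)

def Mxi {d : ℕ} (ξ : Fin d → ℝ × ℝ) : ℝ := ∑ i, (|(ξ i).1| + |(ξ i).2|)

lemma Mxi_nonneg {d : ℕ} (ξ : Fin d → ℝ × ℝ) : 0 ≤ Mxi ξ :=
  Finset.sum_nonneg fun i _ => by positivity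

lemma pairL_le {d : ℕ} (ξ : Fin d → ℝ × ℝ) (v : Evec d) : pairL ξ v ≤ Mxi ξ * ‖v‖ := by
  rw [pairL, Mxi, Finset.sum_mul]
  refine Finset.sum_le_sum fun i _ => ?_
  have hv := abs_coord_le v i
  have h1 : max (v i) 0 ≤ ‖v‖ := le_trans (max_le (le_abs_self _) (abs_nonneg _)) hv
  have h2 : max (-(v i)) 0 ≤ ‖v‖ :=
    le_trans (max_le (neg_le_abs _) (abs_nonneg _)) hv
  have h1' : (ξ i).1 * max (v i) 0 ≤ |(ξ i).1| * ‖v‖ := by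
    calc (ξ i).1 * max (v i) 0 ≤ |(ξ i).1| * max (v i) 0 :=
          mul_le_mul_of_nonneg_right (le_abs_self _) (le_max_right _ _)
    _ ≤ |(ξ i).1| * ‖v‖ := mul_le_mul_of_nonneg_left h1 (abs_nonneg _)
  have h2' : (ξ i).2 * max (-(v i)) 0 ≤ |(ξ i).2| * ‖v‖ := by
    calc (ξ i).2 * max (-(v i)) 0 ≤ |(ξ i).2| * max (-(v i)) 0 :=
          mul_le_mul_of_nonneg_right (le_abs_self _) (le_max_right _ _)
    _ ≤ |(ξ i).2| * ‖v‖ := mul_le_mul_of_nonneg_left h2 (abs_nonneg _)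
  nlinarith [norm_nonneg v]

lemma bddAbove_HN {d N : ℕ} (L : Evec d → Evec d → ℝ) (g : ℝ → ℝ)
    (hsl : ∀ a : ℝ, 0 ≤ a → ∀ (x v : Evec d), a * ‖v‖ + g a ≤ L x v)
    (x : Fin d → ZMod N) (ξ : Fin d → ℝ × ℝ) :
    BddAbove (Set.range fun v => pairL ξ v - L (latE d N x) v) := by
  refine ⟨-(g (Mxi ξ)), ?_⟩
  rintro _ ⟨v, rfl⟩
  have h1 := pairL_le ξ v
  have h2 := hsl (Mxi ξ) (Mxi_nonneg ξ) (latE d N x) v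
  simp only []
  linarith

lemma le_HNlat {d N : ℕ} (L : Evec d → Evec d → ℝ) (g : ℝ → ℝ)
    (hsl : ∀ a : ℝ, 0 ≤ a → ∀ (x v : Evec d), a * ‖v‖ + g a ≤ L x v)
    (x : Fin d → ZMod N) (ξ : Fin d → ℝ × ℝ) (v : Evec d) :
    pairL ξ v - L (latE d N x) v ≤ HNlat L x ξ :=
  le_ciSup (bddAbove_HN L g hsl x ξ) v

lemma pairL_smul_add {d : ℕ} (a b : ℝ) (p q : Fin d → ℝ × ℝ) (v : Evec d) :
    pairL (a • p + b • q) v = a * pairL p v + b * pairL q v := by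
  simp only [pairL, Finset.mul_sum, ← Finset.sum_add_distrib]
  refine Finset.sum_congr rfl fun i _ => ?_
  simp only [Pi.add_apply, Pi.smul_apply, Prod.fst_add, Prod.snd_add, Prod.smul_fst,
    Prod.smul_snd, smul_eq_mul]
  ring

lemma HNlat_convex {d N : ℕ} (L : Evec d → Evec d → ℝ) (g : ℝ → ℝ)
    (hsl : ∀ a : ℝ, 0 ≤ a → ∀ (x v : Evec d), a * ‖v‖ + g a ≤ L x v)
    (x : Fin d → ZMod N) : ConvexOn ℝ Set.univ (HNlat L x) := by
  refine ⟨convex_univ, fun p _ q _ a b ha hb hab => ?_⟩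
  rw [HNlat]
  apply ciSup_le
  intro v
  rw [pairL_smul_add]
  have h1 : a * (pairL p v - L (latE d N x) v) ≤ a * HNlat L x p :=
    mul_le_mul_of_nonneg_left (le_HNlat L g hsl x p v) ha
  have h2 : b * (pairL q v - L (latE d N x) v) ≤ b * HNlat L x q :=
    mul_le_mul_of_nonneg_left (le_HNlat L g hsl x q v) hb
  have hL : a * L (latE d N x) v + b * L (latE d N x) v = L (latE d N x) v := by
    rw [← add_mul, hab, one_mul]
  simp only [smul_eq_mul]
  linarith [h1, h2]

lemma HNlat_continuous {d N : ℕ} (L : Evec d → Evec d → ℝ) (g : ℝ → ℝ)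
    (hsl : ∀ a : ℝ, 0 ≤ a → ∀ (x v : Evec d), a * ‖v‖ + g a ≤ L x v)
    (x : Fin d → ZMod N) : Continuous (HNlat L x) :=
  (HNlat_convex L g hsl x).locallyLipschitz.continuous

lemma pairL_zero {d : ℕ} (ξ : Fin d → ℝ × ℝ) : pairL ξ (0 : Evec d) = 0 := by
  simp [pairL]

lemma pairL_single {d : ℕ} (ξ : Fin d → ℝ × ℝ) (i : Fin d) :
    pairL ξ (EuclideanSpace.single i (1:ℝ)) = (ξ i).1 := by
  rw [pairL, Finset.sum_eq_single i]
  · simp [EuclideanSpace.single_apply]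
  · intro j _ hj
    simp [EuclideanSpace.single_apply, hj]
  · simp

lemma pairL_neg_single {d : ℕ} (ξ : Fin d → ℝ × ℝ) (i : Fin d) :
    pairL ξ (-EuclideanSpace.single i (1:ℝ)) = (ξ i).2 := by
  rw [pairL, Finset.sum_eq_single i]
  · simp [EuclideanSpace.single_apply]
  · intro j _ hj
    simp [EuclideanSpace.single_apply, hj]
  · simp

lemma zmod_val_sub_one {N : ℕ} [NeZero N] {a : ZMod N} (ha : a ≠ 0) :
    (a - 1).val = a.val - 1 := by
  have h1 : 1 ≤ a.val := ZMod.val_pos.2 ha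
  have h2 : a.val < N := ZMod.val_lt a
  have h3 : a - 1 = ((a.val - 1 : ℕ) : ZMod N) := by
    rw [Nat.cast_sub h1, Nat.cast_one, ZMod.natCast_val, ZMod.cast_id]
  rw [h3, ZMod.val_cast_of_lt (by omega)]

lemma pairL_nonpos {d : ℕ} (ξ : Fin d → ℝ × ℝ)
    (h1 : ∀ i, (ξ i).1 ≤ 0) (h2 : ∀ i, (ξ i).2 ≤ 0) (v : Evec d) :
    pairL ξ v ≤ 0 := by
  rw [pairL]
  apply Finset.sum_nonpos
  intro i _
  have := mul_nonpos_of_nonpos_of_nonneg (h1 i) (le_max_right (v i) 0)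
  have := mul_nonpos_of_nonpos_of_nonneg (h2 i) (le_max_right (-(v i)) 0)
  linarith

lemma path_bound {d N : ℕ} [NeZero N] (φ : (Fin d → ZMod N) → ℝ) (B : ℝ)
    (hB : ∀ (x : Fin d → ZMod N) (i : Fin d), |φ (x + Pi.single i 1) - φ x| ≤ B) :
    ∀ (n : ℕ) (c : Fin d → ZMod N), (∑ i, (c i).val) = n →
      ∀ x, |φ (x + c) - φ x| ≤ n * B := by
  intro n
  induction n with
  | zero =>
    intro c hc x
    have hc0 : c = 0 := by
      funext i
      have : (c i).val = 0 := by
        by_contra h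
        have h1 : 1 ≤ (c i).val := Nat.one_le_iff_ne_zero.2 h
        have h2 : (c i).val ≤ ∑ j, (c j).val :=
          Finset.single_le_sum (f := fun j => (c j).val) (fun j _ => Nat.zero_le _)
            (Finset.mem_univ i)
        omega
      exact (ZMod.val_eq_zero _).mp this
    simp [hc0]
  | succ n ih =>
    intro c hc x
    have hex : ∃ i, c i ≠ 0 := by
      by_contra h
      push_neg at h
      have : (∑ i, (c i).val) = 0 := by
        apply Finset.sum_eq_zero; intro i _; simp [h i]
      omega
    obtain ⟨i, hi⟩ := hex
    set c' : Fin d → ZMod N := c - Pi.single i 1 with hc'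
    have hsum : (∑ j, (c' j).val) = n := by
      have hstep : ∀ j, c' j = if j = i then c i - 1 else c j := by
        intro j
        by_cases hj : j = i
        · subst hj; simp [hc']
        · simp [hc', hj, Pi.single_eq_of_ne hj]
      have : (∑ j, (c' j).val) = (∑ j, (c j).val) - 1 := by
        rw [← Finset.sum_erase_add _ _ (Finset.mem_univ i),
            ← Finset.sum_erase_add _ (fun j => (c j).val) (Finset.mem_univ i)]
        have h1 : ∑ j ∈ Finset.univ.erase i, (c' j).val
            = ∑ j ∈ Finset.univ.erase i, (c j).val := by
          apply Finset.sum_congr rfl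
          intro j hj
          rw [hstep j, if_neg (Finset.ne_of_mem_erase hj)]
        have h2 : (c' i).val = (c i).val - 1 := by
          rw [hstep i, if_pos rfl, zmod_val_sub_one hi]
        have h3 : 1 ≤ (c i).val := ZMod.val_pos.2 hi
        omega
      omega
    have hBnn : 0 ≤ B := le_trans (abs_nonneg _) (hB x i)
    have hxc : x + c = (x + c') + Pi.single i 1 := by
      rw [hc']; abel
    calc |φ (x + c) - φ x|
        ≤ |φ (x + c) - φ (x + c')| + |φ (x + c') - φ x| := abs_sub_le _ _ _
      _ ≤ B + n * B := by
          apply add_le_add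
          · rw [hxc]; exact hB (x + c') i
          · exact ih c' hsum x
      _ = (↑(n + 1)) * B := by push_cast; ring

/-- existence of a solution of the weak KAM equation on the lattice,
obtained as a vanishing-discount limit: given the solutions `φ_{N,λ}` of the
discounted Bellman equations, there are `λ_k → 0`, `φ_N` and `H̄_N` with
`𝓗_N(x, (−Δ_N)φ_N(x)) = H̄_N`, `λ_k φ_{N,λ_k} → −H̄_N` uniformly on (the finite set)
`Λ_N` and `φ_{N,λ_k}(·) − φ_{N,λ_k}(z) → φ_N(·)` pointwise. -/
theorem stmt12 (d N : ℕ) [NeZero N] (L : Evec d → Evec d → ℝ) (g : ℝ → ℝ)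
    (hLc : Continuous (Function.uncurry L))
    (hconv : ∀ x : Evec d, ConvexOn ℝ Set.univ (L x))
    (hsl : ∀ a : ℝ, 0 ≤ a → ∀ (x v : Evec d), a * ‖v‖ + g a ≤ L x v)
    (φl : ℝ → (Fin d → ZMod N) → ℝ)
    (hsol : ∀ lam : ℝ, 0 < lam →
      ∀ x, lam * φl lam x + HNlat L x (negDeltaN (φl lam) x) = 0)
    (z : Fin d → ZMod N) :
    ∃ (lk : ℕ → ℝ) (φN : (Fin d → ZMod N) → ℝ) (HbarN : ℝ),
      (∀ k, 0 < lk k) ∧ Tendsto lk atTop (nhds 0) ∧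
      (∀ x, HNlat L x (negDeltaN φN x) = HbarN) ∧
      (∀ x, Tendsto (fun k => lk k * φl (lk k) x) atTop (nhds (-HbarN))) ∧
      (∀ x, Tendsto (fun k => φl (lk k) x - φl (lk k) z) atTop (nhds (φN x))) := by
  classical
  have hNpos : (0:ℝ) < N := by
    exact_mod_cast Nat.pos_of_ne_zero (NeZero.ne N)
  -- uniform upper bound for lam * φl lam
  set M₀ : ℝ := ∑ x : Fin d → ZMod N, |L (latE d N x) 0| with hM₀
  have hub : ∀ lam, 0 < lam → ∀ x, lam * φl lam x ≤ M₀ := by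
    intro lam hlam x
    have heq := hsol lam hlam x
    have h1 : -L (latE d N x) 0 ≤ HNlat L x (negDeltaN (φl lam) x) := by
      have := le_HNlat L g hsl x (negDeltaN (φl lam) x) 0
      rwa [pairL_zero, zero_sub] at this
    have h2 : L (latE d N x) 0 ≤ M₀ :=
      le_trans (le_abs_self _)
        (Finset.single_le_sum (f := fun y => |L (latE d N y) 0|)
          (fun y _ => abs_nonneg _) (Finset.mem_univ x))
    linarith
  -- uniform lower bound
  have hlb : ∀ lam, 0 < lam → ∀ x, g 0 ≤ lam * φl lam x := by
    intro lam hlam x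
    obtain ⟨x₀, _, hx₀⟩ := Finset.exists_min_image Finset.univ (φl lam)
      ⟨x, Finset.mem_univ x⟩
    have hkey : HNlat L x₀ (negDeltaN (φl lam) x₀) ≤ -(g 0) := by
      apply ciSup_le
      intro v
      have hL := hsl 0 le_rfl (latE d N x₀) v
      have hp : pairL (negDeltaN (φl lam) x₀) v ≤ 0 := by
        apply pairL_nonpos
        · intro i
          have hmin := hx₀ (x₀ + Pi.single i 1) (Finset.mem_univ _)
          have := mul_nonneg hNpos.le (sub_nonneg.2 hmin)
          simp only [negDeltaN, dplus]
          linarith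
        · intro i
          have hmin := hx₀ (x₀ - Pi.single i 1) (Finset.mem_univ _)
          have := mul_nonneg hNpos.le (sub_nonneg.2 hmin)
          simp only [negDeltaN, dminus]
          linarith
      simp only [zero_mul, zero_add] at hL
      linarith
    have heq := hsol lam hlam x₀
    have h2 : lam * φl lam x₀ ≤ lam * φl lam x :=
      mul_le_mul_of_nonneg_left (hx₀ x (Finset.mem_univ x)) hlam.le
    linarith
  -- step (gradient) bound
  set M₁ : ℝ := ∑ x : Fin d → ZMod N, ∑ i : Fin d,
      (|L (latE d N x) (EuclideanSpace.single i (1:ℝ))| +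
       |L (latE d N x) (-EuclideanSpace.single i (1:ℝ))|) with hM₁
  set C : ℝ := -(g 0) + M₀ + M₁ with hC
  set B : ℝ := max (C / N) 0 with hB
  have hBnn : 0 ≤ B := le_max_right _ _
  have hstep : ∀ lam, 0 < lam → ∀ (x : Fin d → ZMod N) (i : Fin d),
      |φl lam (x + Pi.single i 1) - φl lam x| ≤ B := by
    intro lam hlam x i
    have hcomp : ∀ y : Fin d → ZMod N,
        (negDeltaN (φl lam) y i).1 ≤ C ∧ (negDeltaN (φl lam) y i).2 ≤ C := by
      intro y
      have heq := hsol lam hlam y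
      have hHle : HNlat L y (negDeltaN (φl lam) y) ≤ -(g 0) := by
        have := hlb lam hlam y; linarith
      have hM1y : |L (latE d N y) (EuclideanSpace.single i (1:ℝ))| +
          |L (latE d N y) (-EuclideanSpace.single i (1:ℝ))| ≤ M₁ := by
        refine le_trans ?_
          (Finset.single_le_sum
            (f := fun x => ∑ i : Fin d,
              (|L (latE d N x) (EuclideanSpace.single i (1:ℝ))| +
               |L (latE d N x) (-EuclideanSpace.single i (1:ℝ))|))
            (fun x _ => Finset.sum_nonneg fun i _ => by positivity)
            (Finset.mem_univ y))
        exact Finset.single_le_sum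
          (f := fun i => (|L (latE d N y) (EuclideanSpace.single i (1:ℝ))| +
            |L (latE d N y) (-EuclideanSpace.single i (1:ℝ))|))
          (fun i _ => by positivity) (Finset.mem_univ i)
      have hM0nn : 0 ≤ M₀ := Finset.sum_nonneg fun x _ => abs_nonneg _
      constructor
      · have h := le_HNlat L g hsl y (negDeltaN (φl lam) y)
          (EuclideanSpace.single i (1:ℝ))
        rw [pairL_single] at h
        have hLle : L (latE d N y) (EuclideanSpace.single i (1:ℝ)) ≤ M₁ := by
          have := abs_nonneg (L (latE d N y) (-EuclideanSpace.single i (1:ℝ)))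
          linarith [le_abs_self (L (latE d N y) (EuclideanSpace.single i (1:ℝ)))]
        rw [hC]; linarith
      · have h := le_HNlat L g hsl y (negDeltaN (φl lam) y)
          (-EuclideanSpace.single i (1:ℝ))
        rw [pairL_neg_single] at h
        have hLle : L (latE d N y) (-EuclideanSpace.single i (1:ℝ)) ≤ M₁ := by
          have := abs_nonneg (L (latE d N y) (EuclideanSpace.single i (1:ℝ)))
          linarith [le_abs_self (L (latE d N y) (-EuclideanSpace.single i (1:ℝ)))]
        rw [hC]; linarith
    have hup : φl lam x - φl lam (x + Pi.single i 1) ≤ C / N := by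
      have h := (hcomp x).1
      simp only [negDeltaN, dplus] at h
      rw [le_div_iff₀ hNpos]
      nlinarith
    have hdn : φl lam (x + Pi.single i 1) - φl lam x ≤ C / N := by
      have h := (hcomp (x + Pi.single i 1)).2
      simp only [negDeltaN, dminus] at h
      have hpt : x + Pi.single i 1 - Pi.single i 1 = x := by abel
      rw [hpt] at h
      rw [le_div_iff₀ hNpos]
      nlinarith
    exact le_trans (abs_sub_le_iff.2 ⟨hdn, hup⟩) (le_max_left _ _)
  -- uniform bound on differences to z
  have hdiam : ∀ lam, 0 < lam → ∀ x, |φl lam x - φl lam z| ≤ (d * N : ℕ) * B := by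
    intro lam hlam x
    have hpath := path_bound (φl lam) B (hstep lam hlam)
      (∑ i, ((x - z) i).val) (x - z) rfl z
    rw [show z + (x - z) = x by abel] at hpath
    refine le_trans hpath ?_
    have hval : (∑ i, ((x - z) i).val) ≤ d * N := by
      calc (∑ i, ((x - z) i).val) ≤ ∑ _i : Fin d, N :=
            Finset.sum_le_sum fun i _ => (ZMod.val_lt _).le
        _ = d * N := by simp [Finset.sum_const, Finset.card_univ]
    exact mul_le_mul_of_nonneg_right (by exact_mod_cast hval) hBnn
  -- compactness
  set μ : ℕ → ℝ := fun k => 1 / (k + 1) with hμ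
  have hμpos : ∀ k, 0 < μ k := fun k => by positivity
  set F : ℕ → ((Fin d → ZMod N) → ℝ) × ((Fin d → ZMod N) → ℝ) :=
    fun k => (fun x => μ k * φl (μ k) x, fun x => φl (μ k) x - φl (μ k) z) with hF
  set R : ℝ := max (|g 0| + |M₀|) ((d * N : ℕ) * B) with hR
  have hRnn : 0 ≤ R := le_trans (by positivity) (le_max_left _ _)
  have hFmem : ∀ k, F k ∈ Metric.closedBall
      (0 : ((Fin d → ZMod N) → ℝ) × ((Fin d → ZMod N) → ℝ)) R := by
    intro k
    rw [Metric.mem_closedBall, dist_zero_right, Prod.norm_def]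
    apply max_le
    · rw [pi_norm_le_iff_of_nonneg hRnn]
      intro x
      rw [Real.norm_eq_abs]
      have h1 := hlb (μ k) (hμpos k) x
      have h2 := hub (μ k) (hμpos k) x
      have habs : |μ k * φl (μ k) x| ≤ |g 0| + |M₀| := by
        rw [abs_le]
        constructor
        · have := neg_abs_le (g 0); have := abs_nonneg M₀; linarith
        · have := le_abs_self M₀; have := abs_nonneg (g 0); linarith
      exact le_trans habs (le_max_left _ _)
    · rw [pi_norm_le_iff_of_nonneg hRnn]
      intro x
      rw [Real.norm_eq_abs]
      exact le_trans (hdiam (μ k) (hμpos k) x) (le_max_right _ _)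
  obtain ⟨p, -, σ, hσ, hconv'⟩ :=
    tendsto_subseq_of_bounded (Metric.isBounded_closedBall) hFmem
  set lk : ℕ → ℝ := fun k => μ (σ k) with hlk
  have hlkpos : ∀ k, 0 < lk k := fun k => hμpos _
  have hlk0 : Tendsto lk atTop (nhds 0) := by
    have h1 : Tendsto μ atTop (nhds 0) := by
      rw [hμ]
      exact tendsto_one_div_add_atTop_nhds_zero_nat
    exact h1.comp hσ.tendsto_atTop
  have hA : ∀ x, Tendsto (fun k => lk k * φl (lk k) x) atTop (nhds (p.1 x)) := by
    intro x
    have hx : Continuous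
        (fun q : ((Fin d → ZMod N) → ℝ) × ((Fin d → ZMod N) → ℝ) => q.1 x) :=
      (continuous_apply x).comp continuous_fst
    exact (hx.tendsto p).comp hconv'
  have hD : ∀ x, Tendsto (fun k => φl (lk k) x - φl (lk k) z) atTop (nhds (p.2 x)) := by
    intro x
    have hx : Continuous
        (fun q : ((Fin d → ZMod N) → ℝ) × ((Fin d → ZMod N) → ℝ) => q.2 x) :=
      (continuous_apply x).comp continuous_snd
    exact (hx.tendsto p).comp hconv'
  have hconst : ∀ x, p.1 x = p.1 z := by
    intro x
    have h1 : Tendsto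
        (fun k => lk k * φl (lk k) z + lk k * (φl (lk k) x - φl (lk k) z))
        atTop (nhds (p.1 z + 0 * p.2 x)) := (hA z).add (hlk0.mul (hD x))
    have h2 : (fun k => lk k * φl (lk k) z + lk k * (φl (lk k) x - φl (lk k) z))
        = fun k => lk k * φl (lk k) x := by funext k; ring
    rw [h2] at h1
    have h3 := tendsto_nhds_unique (hA x) h1
    rw [h3]; ring
  have hEq : ∀ x, HNlat L x (negDeltaN p.2 x) = -(p.1 z) := by
    intro x
    have hξ : Tendsto (fun k => negDeltaN (φl (lk k)) x) atTop
        (nhds (negDeltaN p.2 x)) := by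
      rw [tendsto_pi_nhds]
      intro i
      have hplus : Tendsto (fun k => -dplus (φl (lk k)) x i) atTop
          (nhds (-dplus p.2 x i)) := by
        have h1 := ((hD (x + Pi.single i 1)).sub (hD x))
        have h2 : (fun k => (φl (lk k) (x + Pi.single i 1) - φl (lk k) z)
            - (φl (lk k) x - φl (lk k) z))
            = fun k => φl (lk k) (x + Pi.single i 1) - φl (lk k) x := by
          funext k; ring
        rw [h2] at h1
        exact ((h1.const_mul (N:ℝ)).neg)
      have hminus : Tendsto (fun k => -dminus (φl (lk k)) x i) atTop
          (nhds (-dminus p.2 x i)) := by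
        have h1 := ((hD (x - Pi.single i 1)).sub (hD x))
        have h2 : (fun k => (φl (lk k) (x - Pi.single i 1) - φl (lk k) z)
            - (φl (lk k) x - φl (lk k) z))
            = fun k => φl (lk k) (x - Pi.single i 1) - φl (lk k) x := by
          funext k; ring
        rw [h2] at h1
        exact ((h1.const_mul (N:ℝ)).neg)
      exact hplus.prodMk_nhds hminus
    have hHconv : Tendsto (fun k => HNlat L x (negDeltaN (φl (lk k)) x)) atTop
        (nhds (HNlat L x (negDeltaN p.2 x))) :=
      ((HNlat_continuous L g hsl x).tendsto _).comp hξ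
    have hfun : (fun k => HNlat L x (negDeltaN (φl (lk k)) x))
        = fun k => -(lk k * φl (lk k) x) := by
      funext k
      have := hsol (lk k) (hlkpos k) x
      linarith
    rw [hfun] at hHconv
    have hother : Tendsto (fun k => -(lk k * φl (lk k) x)) atTop
        (nhds (-(p.1 z))) := by
      rw [← hconst x]
      exact (hA x).neg
    exact tendsto_nhds_unique hHconv hother
  refine ⟨lk, p.2, -(p.1 z), hlkpos, hlk0, hEq, ?_, hD⟩
  intro x
  rw [neg_neg, ← hconst x]
  exact hA x
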